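/- Let n ≥ 3 be an integer and let a = (a₁,…,aₙ) be a tuple of integers with a₁ ≥ ⋯ ≥ aₙ ≥ 0 and a₁+⋯+aₙ even. Then C′_n(a) = 8n+4 if and only if a = 2ε₁+2ε₂, or n = 7 and a = ε₁+ε₂+ε₃+ε₄+ε₅+ε₆. -/

import Mathlib

open Finset

/-- The Casimir number `C′_n(a) = Σ_{i=1}^{n} aᵢ(aᵢ + 2n + 2 − 2i)` for `sp(n)`. -/
def casimirSp (n : ℕ) (a : Fin n → ℤ) : ℤ :=
  ∑ i : Fin n, a i * (a i + 2 * (n : ℤ) + 2 - 2 * ((i.1 : ℤ) + 1))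

/-- The tuple `ε₁ + ⋯ + ε_k` (integer entries). -/
def epsSumZ (n k : ℕ) : Fin n → ℤ := fun j => if (j.1 : ℕ) < k then 1 else 0

/-- The tuple `2ε₁ + 2ε₂`. -/
def twoEps1TwoEps2Z (n : ℕ) : Fin n → ℤ := fun j => if j.1 < 2 then 2 else 0

/-- for `n ≥ 3` and a tuple `a = (a₁,…,aₙ)` of integers with
`a₁ ≥ ⋯ ≥ aₙ ≥ 0` and `a₁+⋯+aₙ` even, one has `C′_n(a) = 8n+4` iff
`a = 2ε₁+2ε₂`, or `n = 7` and `a = ε₁+ε₂+ε₃+ε₄+ε₅+ε₆`. -/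

lemma downclosed_mem_iff {n : ℕ} (S : Finset (Fin n))
    (hS : ∀ i j : Fin n, i ≤ j → j ∈ S → i ∈ S) (i : Fin n) : i ∈ S ↔ i.1 < S.card := by
  constructor
  · intro hi
    have h1 : Finset.Iic i ⊆ S := fun j hj => hS j i (Finset.mem_Iic.mp hj) hi
    have h2 := Finset.card_le_card h1
    rw [Fin.card_Iic] at h2
    omega
  · intro hi
    by_contra hne
    have h2 : S ⊆ Finset.Iio i := by
      intro j hj
      rcases lt_or_ge j i with h | h
      · exact Finset.mem_Iio.mpr h
      · exact absurd (hS i j h hj) hne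
    have h3 := Finset.card_le_card h2
    rw [Fin.card_Iio] at h3
    omega

lemma sum_indicator {n k : ℕ} (hk : k ≤ n) (c : ℕ → ℤ) :
    ∑ i : Fin n, (if i.1 < k then c i.1 else 0) = ∑ m ∈ range k, c m := by
  rw [Fin.sum_univ_eq_sum_range (fun m => if m < k then c m else 0) n]
  rw [Finset.range_eq_Ico, ← Finset.sum_Ico_consecutive _ (Nat.zero_le k) hk]
  rw [show Finset.Ico 0 k = Finset.range k from (Finset.range_eq_Ico k).symm]
  have h1 : ∑ m ∈ Finset.Ico k n, (if m < k then c m else 0) = 0 :=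
    Finset.sum_eq_zero fun m hm => if_neg (by have := (Finset.mem_Ico.mp hm).1; omega)
  rw [h1, add_zero]
  exact Finset.sum_congr rfl fun m hm => if_pos (Finset.mem_range.mp hm)

lemma sum_lin (k : ℕ) (d : ℤ) : ∑ m ∈ range k, (d - 2 * (m : ℤ)) = k * (d + 1 - k) := by
  induction k with
  | zero => simp
  | succ k ih => rw [Finset.sum_range_succ, ih]; push_cast; ring

lemma term_expand (x t : ℤ) (hx0 : 0 ≤ x) (hx3 : x ≤ 3) :
    x * (x + t) = (if 1 ≤ x then t + 1 else 0) + (if 2 ≤ x then t + 3 else 0)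
      + (if 3 ≤ x then t + 5 else 0) := by
  interval_cases x <;> norm_num <;> ring

lemma val_expand (x : ℤ) (hx0 : 0 ≤ x) (hx3 : x ≤ 3) :
    x = (if 1 ≤ x then 1 else 0) + (if 2 ≤ x then 1 else 0) + (if 3 ≤ x then 1 else 0) := by
  interval_cases x <;> norm_num

lemma sum_level {n : ℕ} (a : Fin n → ℤ) (v : ℤ) (K : ℕ) (hK : K ≤ n)
    (hmem : ∀ i : Fin n, v ≤ a i ↔ i.1 < K) (e : ℤ) :
    ∑ i : Fin n, (if v ≤ a i then 2 * (n : ℤ) - 2 * (i.1 : ℤ) + e else 0)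
      = K * (2 * (n : ℤ) + e + 1 - K) := by
  have h1 : ∑ i : Fin n, (if v ≤ a i then 2 * (n : ℤ) - 2 * (i.1 : ℤ) + e else 0)
      = ∑ i : Fin n, (if i.1 < K then (2 * (n : ℤ) + e) - 2 * (i.1 : ℤ) else 0) := by
    refine Finset.sum_congr rfl fun i _ => ?_
    by_cases h : v ≤ a i
    · rw [if_pos h, if_pos ((hmem i).mp h)]; ring
    · rw [if_neg h, if_neg fun hh => h ((hmem i).mpr hh)]
  rw [h1, sum_indicator hK (fun m => (2 * (n : ℤ) + e) - 2 * (m : ℤ)), sum_lin]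

lemma sum_level_one {n : ℕ} (a : Fin n → ℤ) (v : ℤ) (K : ℕ) (hK : K ≤ n)
    (hmem : ∀ i : Fin n, v ≤ a i ↔ i.1 < K) :
    ∑ i : Fin n, (if v ≤ a i then (1 : ℤ) else 0) = K := by
  have h1 : ∑ i : Fin n, (if v ≤ a i then (1:ℤ) else 0)
      = ∑ i : Fin n, (if i.1 < K then ((fun _ : ℕ => (1:ℤ)) i.1) else 0) :=
    Finset.sum_congr rfl fun i _ => by rw [if_congr (hmem i) rfl rfl]
  rw [h1, sum_indicator hK (fun _ => (1:ℤ))]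
  simp


lemma exists_profile {n : ℕ} (a : Fin n → ℤ)
    (hmono : ∀ i j : Fin n, i ≤ j → a j ≤ a i)
    (hnonneg : ∀ i, 0 ≤ a i) (ha3 : ∀ i, a i ≤ 3) :
    ∃ k1 k2 k3 : ℕ, k3 ≤ k2 ∧ k2 ≤ k1 ∧ k1 ≤ n ∧
      (∀ i : Fin n, 1 ≤ a i ↔ i.1 < k1) ∧ (∀ i : Fin n, 2 ≤ a i ↔ i.1 < k2) ∧
      (∀ i : Fin n, 3 ≤ a i ↔ i.1 < k3) ∧
      (∑ i, a i) = (k1 : ℤ) + k2 + k3 ∧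
      casimirSp n a = (k1 : ℤ) * (2 * n + 2 - k1) + (k2 : ℤ) * (2 * n + 4 - k2)
        + (k3 : ℤ) * (2 * n + 6 - k3) := by
  have hdc : ∀ v : ℤ, ∀ i j : Fin n, i ≤ j →
      j ∈ univ.filter (fun i => v ≤ a i) → i ∈ univ.filter (fun i => v ≤ a i) := by
    intro v i j hij hj
    simp only [Finset.mem_filter, Finset.mem_univ, true_and] at hj ⊢
    exact hj.trans (hmono i j hij)
  have hmem : ∀ v : ℤ, ∀ i : Fin n,
      v ≤ a i ↔ i.1 < (univ.filter (fun i => v ≤ a i)).card := by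
    intro v i
    rw [← downclosed_mem_iff _ (hdc v) i]
    simp
  have hKn : ∀ v : ℤ, (univ.filter (fun i => v ≤ a i)).card ≤ n := fun v =>
    (Finset.card_filter_le _ _).trans (by simp)
  refine ⟨(univ.filter (fun i => (1:ℤ) ≤ a i)).card, (univ.filter (fun i => (2:ℤ) ≤ a i)).card,
    (univ.filter (fun i => (3:ℤ) ≤ a i)).card, ?_, ?_, hKn 1, hmem 1, hmem 2, hmem 3, ?_, ?_⟩
  · refine Finset.card_le_card ?_
    intro i hi
    simp only [Finset.mem_filter, Finset.mem_univ, true_and] at hi ⊢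
    linarith
  · refine Finset.card_le_card ?_
    intro i hi
    simp only [Finset.mem_filter, Finset.mem_univ, true_and] at hi ⊢
    linarith
  · rw [Finset.sum_congr rfl (fun i (_ : i ∈ univ) => val_expand (a i) (hnonneg i) (ha3 i)),
      Finset.sum_add_distrib, Finset.sum_add_distrib,
      sum_level_one a 1 _ (hKn 1) (hmem 1), sum_level_one a 2 _ (hKn 2) (hmem 2),
      sum_level_one a 3 _ (hKn 3) (hmem 3)]
  · have h : ∀ i ∈ (univ : Finset (Fin n)),
        a i * (a i + 2 * (n : ℤ) + 2 - 2 * ((i.1 : ℤ) + 1))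
          = (if 1 ≤ a i then 2 * (n : ℤ) - 2 * (i.1 : ℤ) + 1 else 0)
            + (if 2 ≤ a i then 2 * (n : ℤ) - 2 * (i.1 : ℤ) + 3 else 0)
            + (if 3 ≤ a i then 2 * (n : ℤ) - 2 * (i.1 : ℤ) + 5 else 0) := by
      intro i _
      have h2 := term_expand (a i) (2 * (n : ℤ) - 2 * (i.1 : ℤ)) (hnonneg i) (ha3 i)
      calc a i * (a i + 2 * (n : ℤ) + 2 - 2 * ((i.1 : ℤ) + 1))
          = a i * (a i + (2 * (n : ℤ) - 2 * (i.1 : ℤ))) := by ring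
        _ = _ := h2
    unfold casimirSp
    rw [Finset.sum_congr rfl h, Finset.sum_add_distrib, Finset.sum_add_distrib,
      sum_level a 1 _ (hKn 1) (hmem 1) 1, sum_level a 2 _ (hKn 2) (hmem 2) 3,
      sum_level a 3 _ (hKn 3) (hmem 3) 5]
    ring

theorem stmt5 (n : ℕ) (hn : 3 ≤ n) (a : Fin n → ℤ)
    (hmono : ∀ i j : Fin n, i ≤ j → a j ≤ a i)
    (hnonneg : ∀ i, 0 ≤ a i)
    (heven : Even (∑ i, a i)) :
    casimirSp n a = 8 * (n : ℤ) + 4 ↔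
      a = twoEps1TwoEps2Z n ∨ (n = 7 ∧ a = epsSumZ n 6) := by
  constructor
  · intro hC
    have hi0 : (0:ℕ) < n := by omega
    have hterm : ∀ i ∈ (univ : Finset (Fin n)),
        0 ≤ a i * (a i + 2 * (n:ℤ) + 2 - 2 * ((i.1:ℤ) + 1)) := by
      intro i _
      have h1 : (i.1 : ℤ) < n := by exact_mod_cast i.2
      have h2 := hnonneg i
      nlinarith
    have h0 : a ⟨0, hi0⟩ * (a ⟨0, hi0⟩ + 2 * (n:ℤ) + 2 - 2 * (((0:ℕ):ℤ) + 1))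
        ≤ casimirSp n a := Finset.single_le_sum hterm (Finset.mem_univ (⟨0, hi0⟩ : Fin n))
    rw [hC] at h0
    have ha3 : ∀ i, a i ≤ 3 := by
      intro i
      have hle : a i ≤ a ⟨0, hi0⟩ := hmono ⟨0, hi0⟩ i (by simp [Fin.le_def])
      have h00 := hnonneg ⟨0, hi0⟩
      by_contra hgt
      push_neg at hgt
      have h4 : (4:ℤ) ≤ a ⟨0, hi0⟩ := by omega
      push_cast at h0
      nlinarith [mul_nonneg (by linarith : (0:ℤ) ≤ a ⟨0, hi0⟩ - 4)
          (by linarith : (0:ℤ) ≤ a ⟨0, hi0⟩),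
        mul_nonneg (by positivity : (0:ℤ) ≤ 2 * (n:ℤ))
          (by linarith : (0:ℤ) ≤ a ⟨0, hi0⟩ - 4)]
    obtain ⟨k1, k2, k3, h32, h21, h1n, hm1, hm2, hm3, hsum, hcas⟩ :=
      exists_profile a hmono hnonneg ha3
    rw [hsum] at heven
    obtain ⟨r, hr⟩ := heven
    rw [hC] at hcas
    have hk2n : k2 ≤ n := h21.trans h1n
    have hk3n : k3 ≤ n := h32.trans hk2n
    have nn2 : 0 ≤ (k2:ℤ) * (2 * n + 4 - k2) :=
      mul_nonneg (by positivity) (by omega)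
    have nn3 : 0 ≤ (k3:ℤ) * (2 * n + 6 - k3) :=
      mul_nonneg (by positivity) (by omega)
    have e1 : (k1:ℤ) * (2 * n + 2 - k1) ≤ 8 * n + 4 := by linarith
    have hk16 : k1 ≤ 6 := by
      by_contra h7
      push_neg at h7
      have h7' : (7:ℤ) ≤ (k1:ℤ) := by exact_mod_cast h7
      have hn' : (k1:ℤ) ≤ (n:ℤ) := by exact_mod_cast h1n
      nlinarith [mul_nonneg (by linarith : (0:ℤ) ≤ (k1:ℤ) - 7)
          (by linarith : (0:ℤ) ≤ (n:ℤ) - k1), sq_nonneg ((k1:ℤ) - 3)]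
    have hclass : (k1 = 2 ∧ k2 = 2 ∧ k3 = 0) ∨ (n = 7 ∧ k1 = 6 ∧ k2 = 0 ∧ k3 = 0) := by
      interval_cases k1 <;> interval_cases k2 <;> interval_cases k3 <;> omega
    rcases hclass with ⟨e1', e2', e3'⟩ | ⟨e0', e1', e2', e3'⟩
    · subst e1'; subst e2'; subst e3'
      left
      funext i
      have A := hm1 i; have B := hm2 i; have C := hm3 i
      have D := hnonneg i; have E := ha3 i
      simp only [twoEps1TwoEps2Z]
      split_ifs with h <;> omega
    · subst e1'; subst e2'; subst e3'
      right
      refine ⟨e0', ?_⟩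
      funext i
      have A := hm1 i; have B := hm2 i; have C := hm3 i
      have D := hnonneg i; have E := ha3 i
      simp only [epsSumZ]
      split_ifs with h <;> omega
  · rintro (rfl | ⟨rfl, rfl⟩)
    · unfold casimirSp twoEps1TwoEps2Z
      have h : ∀ i ∈ (univ : Finset (Fin n)),
          (if i.1 < 2 then (2:ℤ) else 0) *
            ((if i.1 < 2 then (2:ℤ) else 0) + 2 * (n:ℤ) + 2 - 2 * ((i.1:ℤ) + 1))
          = if i.1 < 2 then (fun m : ℕ => 4 * (n:ℤ) - 4 * (m:ℤ) + 4) i.1 else 0 := by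
        intro i _
        split_ifs with hh <;> ring
      rw [Finset.sum_congr rfl h]
      refine Eq.trans (sum_indicator (show 2 ≤ n by omega)
        (fun m : ℕ => 4 * (n:ℤ) - 4 * (m:ℤ) + 4)) ?_
      rw [Finset.sum_range_succ, Finset.sum_range_succ, Finset.sum_range_zero]
      push_cast
      ring
    · unfold casimirSp epsSumZ
      have h : ∀ i ∈ (univ : Finset (Fin 7)),
          (if i.1 < 6 then (1:ℤ) else 0) *
            ((if i.1 < 6 then (1:ℤ) else 0) + 2 * ((7:ℕ):ℤ) + 2 - 2 * ((i.1:ℤ) + 1))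
          = if i.1 < 6 then (fun m : ℕ => (15:ℤ) - 2 * (m:ℤ)) i.1 else 0 := by
        intro i _
        split_ifs with hh
        · push_cast; ring
        · ring
      rw [Finset.sum_congr rfl h]
      refine Eq.trans (sum_indicator (show 6 ≤ 7 by omega)
        (fun m : ℕ => (15:ℤ) - 2 * (m:ℤ))) ?_
      norm_num [Finset.sum_range_succ]
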